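/- Let K be a Hermitian D×D complex matrix with ‖K‖ ≤ 1, let Π and Π₀ be orthogonal projectors with N := tr Π > 0, and let reals Γ, Δ, ε with 0 ≤ Δ ≤ Γ ≤ 1, Δ < 1 and ε ≥ 0 satisfy KΠ = ΠK, KΠ ≥ √Γ·Π in the Loewner order, ‖(I−Π)K(I−Π)‖ ≤ √Δ, and ‖Π − Π₀‖ ≤ ε. Define the map 𝓔(σ) := KσK + (1 − tr(KσK))·I/D, and let 𝓔' be any function from density matrices to matrices such that |tr(Π(𝓔'(σ) − 𝓔(σ)))| ≤ δ for every density matrix σ, where δ ≥ 0. Suppose ρ' is a density matrix with 𝓔'(ρ') = ρ', and suppose (Γ−Δ) + (D/N)(1−Γ) > 0. Then tr(Π ρ') ≥ (1 − Δ − (D/N)·δ)/((Γ−Δ) + (D/N)(1−Γ)), and consequently tr(Π₀ ρ') ≥ (1 − Δ − (D/N)·δ)/((Γ−Δ) + (D/N)(1−Γ)) − ε. -/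

import Mathlib

open scoped Matrix.Norms.L2Operator ComplexOrder

namespace Stmt15Aux

open Matrix

variable {D : ℕ}

lemma psd_trace_nonneg {M : Matrix (Fin D) (Fin D) ℂ} (hM : M.PosSemidef) :
    0 ≤ M.trace := by
  refine Finset.sum_nonneg fun i _ => ?_
  have h := hM.dotProduct_mulVec_nonneg (Pi.single i 1)
  simpa [dotProduct, Pi.single_apply, Matrix.mulVec] using h

lemma trace_pair_nonneg {A B : Matrix (Fin D) (Fin D) ℂ}
    (hA : A.PosSemidef) (hB : B.PosSemidef) : 0 ≤ (A * B).trace := by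
  open scoped MatrixOrder in
  obtain ⟨C, rfl⟩ := CStarAlgebra.nonneg_iff_eq_star_mul_self.mp hA.nonneg
  rw [Matrix.mul_assoc, Matrix.trace_mul_comm]
  exact psd_trace_nonneg (hB.mul_mul_conjTranspose_same C)

lemma trace_pair_re_nonneg {A B : Matrix (Fin D) (Fin D) ℂ}
    (hA : A.PosSemidef) (hB : B.PosSemidef) : 0 ≤ ((A * B).trace).re :=
  (Complex.nonneg_iff.mp (trace_pair_nonneg hA hB)).1

lemma psd_smul {M : Matrix (Fin D) (Fin D) ℂ} {c : ℝ} (hc : 0 ≤ c) (hM : M.PosSemidef) :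
    ((c : ℂ) • M).PosSemidef := by
  refine Matrix.PosSemidef.of_dotProduct_mulVec_nonneg ?_ ?_
  · have := hM.isHermitian
    simp [Matrix.IsHermitian, Matrix.conjTranspose_smul, Complex.star_def,
      Complex.conj_ofReal, this.eq]
  · intro x
    rw [Matrix.smul_mulVec, dotProduct_smul, smul_eq_mul]
    exact mul_nonneg (Complex.zero_le_real.mpr hc) (hM.dotProduct_mulVec_nonneg x)

lemma herm_dot_star {M : Matrix (Fin D) (Fin D) ℂ} (hM : M.IsHermitian) (x : Fin D → ℂ) :
    star (star x ⬝ᵥ (M *ᵥ x)) = star x ⬝ᵥ (M *ᵥ x) := by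
  conv_lhs => rw [← Matrix.star_dotProduct, Matrix.star_mulVec, hM.eq,
    ← Matrix.dotProduct_mulVec]

lemma psd_of_norm_le {M : Matrix (Fin D) (Fin D) ℂ} (hM : M.IsHermitian)
    {c : ℝ} (h : ‖M‖ ≤ c) :
    ((c : ℂ) • (1 : Matrix (Fin D) (Fin D) ℂ) - M).PosSemidef := by
  refine Matrix.PosSemidef.of_dotProduct_mulVec_nonneg ?_ ?_
  · simp [Matrix.IsHermitian, Matrix.conjTranspose_sub, Matrix.conjTranspose_smul,
      Complex.star_def, Complex.conj_ofReal, hM.eq]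
  · intro x
    set x' : EuclideanSpace ℂ (Fin D) := WithLp.toLp 2 x with hx'
    have hdot : star x ⬝ᵥ x = ((‖x'‖ : ℂ))^2 := by
      rw [dotProduct_comm, ← EuclideanSpace.inner_toLp_toLp, inner_self_eq_norm_sq_to_K]
      rfl
    have hinner : star x ⬝ᵥ (M *ᵥ x) =
        (inner ℂ x' (WithLp.toLp 2 (M *ᵥ x)) : ℂ) := by
      rw [EuclideanSpace.inner_toLp_toLp, dotProduct_comm]
    have habs : ‖star x ⬝ᵥ (M *ᵥ x)‖ ≤ c * ‖x'‖^2 := by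
      rw [hinner]
      calc ‖(inner ℂ x' (WithLp.toLp 2 (M *ᵥ x)) : ℂ)‖
          ≤ ‖x'‖ * ‖WithLp.toLp 2 (M *ᵥ x)‖ := norm_inner_le_norm _ _
        _ ≤ ‖x'‖ * (‖M‖ * ‖x'‖) := by
            gcongr
            exact M.l2_opNorm_mulVec x'
        _ ≤ c * ‖x'‖^2 := by nlinarith [norm_nonneg x', (norm_nonneg M).trans h]
    have him : (star x ⬝ᵥ (M *ᵥ x)).im = 0 := by
      have := herm_dot_star hM x
      have h2 := congrArg Complex.im this
      simp at h2
      linarith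
    rw [Matrix.sub_mulVec, dotProduct_sub, Matrix.smul_mulVec,
      Matrix.one_mulVec, dotProduct_smul, smul_eq_mul, hdot]
    rw [Complex.nonneg_iff]
    constructor
    · have hre : (star x ⬝ᵥ (M *ᵥ x)).re ≤ c * ‖x'‖^2 :=
        (Complex.re_le_norm _).trans habs
      have hcast : ((c : ℂ) * ((‖x'‖ : ℂ))^2 - star x ⬝ᵥ (M *ᵥ x)).re
          = c * ‖x'‖^2 - (star x ⬝ᵥ (M *ᵥ x)).re := by
        have hmul : ((c : ℂ) * ((‖x'‖ : ℂ))^2) = ((c * ‖x'‖^2 : ℝ) : ℂ) := by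
          push_cast; ring
        rw [hmul, Complex.sub_re, Complex.ofReal_re]
      rw [hcast]
      linarith
    · simp [him, pow_two, Complex.mul_im]

lemma re_smul (γ : ℝ) (z : ℂ) : ((γ : ℂ) * z).re = γ * z.re := by
  simp [Complex.mul_re]

end Stmt15Aux

open Stmt15Aux Matrix

set_option maxHeartbeats 1000000

/-- Fault-resilience of the fixed-point process: a perturbed implementation `𝓔'` whose output
differs from `𝓔(σ) = KσK + (1 - tr(KσK))·I/D` by at most `δ` (measured against `Π` on every
density matrix) still has fixed points with high ground-space overlap. -/
theorem stmt15 (D : ℕ) (hD : 1 ≤ D)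
    (K P P₀ : Matrix (Fin D) (Fin D) ℂ)
    (Γ Δ ε : ℝ) (hΔ0 : 0 ≤ Δ) (hΔΓ : Δ ≤ Γ) (hΓ1 : Γ ≤ 1) (hΔ1 : Δ < 1) (hε : 0 ≤ ε)
    (hK : K.IsHermitian) (hKnorm : ‖K‖ ≤ 1)
    (hPherm : P.IsHermitian) (hPproj : P * P = P)
    (hP₀herm : P₀.IsHermitian) (hP₀proj : P₀ * P₀ = P₀)
    (hN : 0 < P.trace.re)
    (hcomm : K * P = P * K)
    (hGamma : (K * P - (Real.sqrt Γ : ℂ) • P).PosSemidef)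
    (hDelta : ‖(1 - P) * K * (1 - P)‖ ≤ Real.sqrt Δ)
    (hPP₀ : ‖P - P₀‖ ≤ ε)
    (E' : Matrix (Fin D) (Fin D) ℂ → Matrix (Fin D) (Fin D) ℂ)
    (δ : ℝ) (hδ : 0 ≤ δ)
    (hE' : ∀ σ : Matrix (Fin D) (Fin D) ℂ, σ.PosSemidef → σ.trace = 1 →
      ‖(P * (E' σ - (K * σ * K +
        (1 - (K * σ * K).trace) • ((D : ℂ)⁻¹ • (1 : Matrix (Fin D) (Fin D) ℂ))))).trace‖ ≤ δ)
    (ρ' : Matrix (Fin D) (Fin D) ℂ) (hρ' : ρ'.PosSemidef) (hρ'tr : ρ'.trace = 1)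
    (hfix : E' ρ' = ρ')
    (hdenom : 0 < (Γ - Δ) + ((D : ℝ) / P.trace.re) * (1 - Γ)) :
    (1 - Δ - ((D : ℝ) / P.trace.re) * δ) / ((Γ - Δ) + ((D : ℝ) / P.trace.re) * (1 - Γ)) ≤
        (P * ρ').trace.re ∧
      (1 - Δ - ((D : ℝ) / P.trace.re) * δ) / ((Γ - Δ) + ((D : ℝ) / P.trace.re) * (1 - Γ)) - ε ≤
        (P₀ * ρ').trace.re := by
  classical
  have hΓ0 : 0 ≤ Γ := hΔ0.trans hΔΓ
  obtain ⟨Q, hQdef⟩ : ∃ Q : Matrix (Fin D) (Fin D) ℂ, Q = 1 - P := ⟨_, rfl⟩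
  rw [← hQdef] at hDelta
  -- basic algebraic identities
  have hQproj : Q * Q = Q := by
    rw [hQdef, Matrix.sub_mul, Matrix.one_mul, Matrix.mul_sub, Matrix.mul_one, hPproj]
    abel
  have hQherm : Q.IsHermitian := hQdef ▸ Matrix.isHermitian_one.sub hPherm
  have hPpsd : P.PosSemidef :=
    by have := Matrix.posSemidef_conjTranspose_mul_self P; rwa [hPherm.eq, hPproj] at this
  have hQpsd : Q.PosSemidef :=
    by have := Matrix.posSemidef_conjTranspose_mul_self Q; rwa [hQherm.eq, hQproj] at this
  have hKQ : K * Q = Q * K := by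
    rw [hQdef, Matrix.mul_sub, Matrix.sub_mul, Matrix.mul_one, Matrix.one_mul, hcomm]
  have hPA : P * (K * P) = K * P := by
    rw [← Matrix.mul_assoc, ← hcomm, Matrix.mul_assoc, hPproj]
  have hAP : (K * P) * P = K * P := by rw [Matrix.mul_assoc, hPproj]
  have hA2 : (K * P) * (K * P) = (K * K) * P := by
    rw [Matrix.mul_assoc, hPA, ← Matrix.mul_assoc]
  have hKPK : K * P * K = K * K * P := by
    rw [Matrix.mul_assoc, ← hcomm, ← Matrix.mul_assoc]
  have hcomm2 : (K * K) * P = P * (K * K) := by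
    rw [Matrix.mul_assoc, hcomm, ← Matrix.mul_assoc, hcomm, Matrix.mul_assoc]
  have hQB : Q * (K * Q) = K * Q := by
    rw [← Matrix.mul_assoc, ← hKQ, Matrix.mul_assoc, hQproj]
  have hB2 : (K * Q) * (K * Q) = (K * K) * Q := by
    rw [Matrix.mul_assoc, hQB, ← Matrix.mul_assoc]
  have hcommQ2 : (K * K) * Q = Q * (K * K) := by
    rw [Matrix.mul_assoc, hKQ, ← Matrix.mul_assoc, hKQ, Matrix.mul_assoc]
  -- Hermitian facts
  have hAherm : (K * P).IsHermitian := by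
    show (K * P)ᴴ = K * P
    rw [Matrix.conjTranspose_mul, hPherm.eq, hK.eq, ← hcomm]
  have hBherm : (K * Q).IsHermitian := by
    show (K * Q)ᴴ = K * Q
    rw [Matrix.conjTranspose_mul, hQherm.eq, hK.eq, ← hKQ]
  have hK2herm : (K * K).IsHermitian := by
    show (K * K)ᴴ = K * K
    rw [Matrix.conjTranspose_mul, hK.eq]
  have hA2psd : ((K * P) * (K * P)).PosSemidef := by
    have := Matrix.posSemidef_conjTranspose_mul_self (K * P)
    rwa [hAherm.eq] at this
  have hB2psd : ((K * Q) * (K * Q)).PosSemidef := by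
    have := Matrix.posSemidef_conjTranspose_mul_self (K * Q)
    rwa [hBherm.eq] at this
  -- (K*P)² - Γ•P is PSD
  have hc2 : ((Real.sqrt Γ : ℝ) : ℂ) * ((Real.sqrt Γ : ℝ) : ℂ) = (Γ : ℂ) := by
    rw [← Complex.ofReal_mul, Real.mul_self_sqrt hΓ0]
  have hNpsd := hGamma
  have hNherm := hGamma.isHermitian
  have hNN : ((K * P - (Real.sqrt Γ : ℂ) • P) * (K * P - (Real.sqrt Γ : ℂ) • P)).PosSemidef := by
    have := Matrix.posSemidef_conjTranspose_mul_self (K * P - (Real.sqrt Γ : ℂ) • P)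
    rwa [hNherm.eq] at this
  have hkey : (K * P) * (K * P) - (Γ : ℂ) • P =
      (K * P - (Real.sqrt Γ : ℂ) • P) * (K * P - (Real.sqrt Γ : ℂ) • P) +
        ((2 * Real.sqrt Γ : ℝ) : ℂ) • (K * P - (Real.sqrt Γ : ℂ) • P) := by
    have h2c : ((2 * Real.sqrt Γ : ℝ) : ℂ) = 2 * ((Real.sqrt Γ : ℝ) : ℂ) := by push_cast; ring
    simp only [Matrix.mul_sub, Matrix.sub_mul, smul_mul_assoc, mul_smul_comm, smul_smul,
      hAP, hPA, hPproj, h2c, ← hc2]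
    module
  have hGamma2 : ((K * P) * (K * P) - (Γ : ℂ) • P).PosSemidef := by
    rw [hkey]
    exact hNN.add (psd_smul (by positivity) hGamma)
  -- P - (K*P)² is PSD
  have hK2norm : ‖K * K‖ ≤ 1 := by
    calc ‖K * K‖ ≤ ‖K‖ * ‖K‖ := Matrix.l2_opNorm_mul K K
      _ ≤ 1 := by nlinarith [norm_nonneg K]
  have h1K2 : ((1 : Matrix (Fin D) (Fin D) ℂ) - K * K).PosSemidef := by
    have := psd_of_norm_le hK2herm hK2norm
    simpa using this
  have hPsub : (P - (K * P) * (K * P)).PosSemidef := by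
    have h := h1K2.mul_mul_conjTranspose_same P
    rw [hPherm.eq] at h
    have hid : P * ((1 : Matrix (Fin D) (Fin D) ℂ) - K * K) * P
        = P - (K * P) * (K * P) := by
      rw [Matrix.mul_sub, Matrix.mul_one, Matrix.sub_mul, hPproj, ← hcomm2,
        Matrix.mul_assoc, hPproj, ← hA2]
    rwa [hid] at h
  -- Δ•Q - (K*Q)² is PSD
  have hBnorm : ‖K * Q‖ ≤ Real.sqrt Δ := by
    have hform : Q * K * Q = K * Q := by rw [Matrix.mul_assoc, hQB]
    rw [← hform]
    exact hDelta
  have hB2norm : ‖(K * Q) * (K * Q)‖ ≤ Δ := by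
    calc ‖(K * Q) * (K * Q)‖ ≤ ‖K * Q‖ * ‖K * Q‖ := Matrix.l2_opNorm_mul _ _
      _ ≤ Real.sqrt Δ * Real.sqrt Δ := by
          have := norm_nonneg (K * Q); nlinarith [Real.sqrt_nonneg Δ]
      _ = Δ := Real.mul_self_sqrt hΔ0
  have hB2herm : ((K * Q) * (K * Q)).IsHermitian := hB2psd.isHermitian
  have hΔ1psd := psd_of_norm_le hB2herm hB2norm
  have hQsub : ((Δ : ℂ) • Q - (K * Q) * (K * Q)).PosSemidef := by
    have h := hΔ1psd.mul_mul_conjTranspose_same Q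
    rw [hQherm.eq] at h
    have hBQ : (K * Q) * Q = K * Q := by rw [Matrix.mul_assoc, hQproj]
    have hQBQ : Q * ((K * Q) * (K * Q)) * Q = (K * Q) * (K * Q) := by
      calc Q * ((K * Q) * (K * Q)) * Q = ((Q * (K * Q)) * (K * Q)) * Q := by
            rw [Matrix.mul_assoc Q (K * Q) (K * Q)]
        _ = ((K * Q) * (K * Q)) * Q := by rw [hQB]
        _ = (K * Q) * ((K * Q) * Q) := by rw [Matrix.mul_assoc]
        _ = (K * Q) * (K * Q) := by rw [hBQ]
    have hid : Q * (((Δ : ℂ) • (1 : Matrix (Fin D) (Fin D) ℂ)) - (K * Q) * (K * Q)) * Q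
        = (Δ : ℂ) • Q - (K * Q) * (K * Q) := by
      rw [Matrix.mul_sub, mul_smul_comm, Matrix.mul_one, Matrix.sub_mul, smul_mul_assoc,
        hQproj, hQBQ]
    rwa [hid] at h
  -- ε•1 - (P - P₀) is PSD
  have hεpsd : ((ε : ℂ) • (1 : Matrix (Fin D) (Fin D) ℂ) - (P - P₀)).PosSemidef :=
    psd_of_norm_le (hPherm.sub hP₀herm) hPP₀
  -- trace pairing with ρ'
  have pair : ∀ M : Matrix (Fin D) (Fin D) ℂ, M.PosSemidef → 0 ≤ ((M * ρ').trace).re :=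
    fun M hM => trace_pair_re_nonneg hM hρ'
  set p := ((P * ρ').trace).re with hpdef
  set n := P.trace.re with hndef
  set a := ((((K * P) * (K * P)) * ρ').trace).re with hadef
  set b := ((((K * Q) * (K * Q)) * ρ').trace).re with hbdef
  -- (1) Γ p ≤ a
  have hΓa : Γ * p ≤ a := by
    have h := pair _ hGamma2
    rw [Matrix.sub_mul, Matrix.trace_sub, Complex.sub_re, smul_mul_assoc, Matrix.trace_smul,
      smul_eq_mul, re_smul] at h
    linarith
  -- (2) a ≤ p
  have hap : a ≤ p := by
    have h := pair _ hPsub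
    rw [Matrix.sub_mul, Matrix.trace_sub, Complex.sub_re] at h
    linarith
  -- (3) 0 ≤ b
  have hb0 : 0 ≤ b := pair _ hB2psd
  -- trace of Q pairing
  have hrQ : ((Q * ρ').trace).re = 1 - p := by
    rw [hQdef, Matrix.sub_mul, Matrix.one_mul, Matrix.trace_sub, Complex.sub_re, hρ'tr,
      Complex.one_re, hpdef]
  -- (4) b ≤ Δ (1 - p)
  have hbΔ : b ≤ Δ * (1 - p) := by
    have h := pair _ hQsub
    rw [Matrix.sub_mul, Matrix.trace_sub, Complex.sub_re, smul_mul_assoc, Matrix.trace_smul,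
      smul_eq_mul, re_smul, hrQ] at h
    linarith
  have hp0 : 0 ≤ p := pair _ hPpsd
  have hq0 : 0 ≤ 1 - p := by have := pair _ hQpsd; rwa [hrQ] at this
  -- (6) n ≤ D
  have hnD : n ≤ (D : ℝ) := by
    have h0 := (Complex.nonneg_iff.mp (psd_trace_nonneg hQpsd)).1
    rw [hQdef, Matrix.trace_sub, Complex.sub_re, Matrix.trace_one] at h0
    simp only [Complex.natCast_re] at h0
    simp only [Fintype.card_fin] at h0
    linarith
  -- (7) p - ε ≤ tr(P₀ ρ')
  have hP₀tr : p - ε ≤ ((P₀ * ρ').trace).re := by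
    have h := pair _ hεpsd
    rw [Matrix.sub_mul, Matrix.trace_sub, Complex.sub_re, smul_mul_assoc, Matrix.trace_smul,
      smul_eq_mul, re_smul, Matrix.one_mul, hρ'tr, Complex.one_re,
      Matrix.sub_mul, Matrix.trace_sub, Complex.sub_re] at h
    linarith
  -- reality of traces
  have haR : (((K * P) * (K * P)) * ρ').trace = ((a : ℝ) : ℂ) := by
    have h := trace_pair_nonneg hA2psd hρ'
    exact Complex.ext rfl (by simpa using (Complex.nonneg_iff.mp h).2.symm)
  have hbR : (((K * Q) * (K * Q)) * ρ').trace = ((b : ℝ) : ℂ) := by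
    have h := trace_pair_nonneg hB2psd hρ'
    exact Complex.ext rfl (by simpa using (Complex.nonneg_iff.mp h).2.symm)
  have hPtrR : P.trace = ((n : ℝ) : ℂ) := by
    have h := psd_trace_nonneg hPpsd
    exact Complex.ext rfl (by simpa using (Complex.nonneg_iff.mp h).2.symm)
  -- main δ inequality
  have hmainC := hE' ρ' hρ' hρ'tr
  rw [hfix] at hmainC
  -- rewrite the trace in real form
  have e1 : (P * (K * ρ' * K)).trace = (((K * P) * (K * P)) * ρ').trace := by
    rw [← Matrix.mul_assoc, Matrix.trace_mul_comm, ← Matrix.mul_assoc, ← Matrix.mul_assoc,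
      hKPK, ← hA2]
  have hsplit : (K * K) * P + (K * K) * Q = K * K := by
    rw [hQdef, Matrix.mul_sub, Matrix.mul_one]
    abel
  have e2 : (K * ρ' * K).trace
      = (((K * P) * (K * P)) * ρ').trace + (((K * Q) * (K * Q)) * ρ').trace := by
    rw [Matrix.trace_mul_comm, ← Matrix.mul_assoc, ← hsplit, Matrix.add_mul,
      Matrix.trace_add, hA2, hB2]
  have e3 : (P * ((1 - (K * ρ' * K).trace) • ((D : ℂ)⁻¹ • (1 : Matrix (Fin D) (Fin D) ℂ)))).trace
      = (1 - (K * ρ' * K).trace) * ((D : ℂ)⁻¹ * P.trace) := by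
    rw [mul_smul_comm, mul_smul_comm, Matrix.mul_one, Matrix.trace_smul, Matrix.trace_smul,
      smul_eq_mul, smul_eq_mul]
  have hexp : (P * (ρ' - (K * ρ' * K +
        (1 - (K * ρ' * K).trace) • ((D : ℂ)⁻¹ • (1 : Matrix (Fin D) (Fin D) ℂ))))).trace
      = ((p - a - (1 - (a + b)) * ((D : ℝ)⁻¹ * n) : ℝ) : ℂ) := by
    rw [Matrix.mul_sub, Matrix.mul_add, Matrix.trace_sub, Matrix.trace_add, e1, e3, e2,
      haR, hbR, hPtrR]
    have hPρR : (P * ρ').trace = ((p : ℝ) : ℂ) := by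
      have h := trace_pair_nonneg hPpsd hρ'
      exact Complex.ext rfl (by simpa using (Complex.nonneg_iff.mp h).2.symm)
    rw [hPρR]
    push_cast
    ring
  rw [hexp] at hmainC
  have hmainR : -δ ≤ p - a - (1 - (a + b)) * ((D : ℝ)⁻¹ * n) := by
    have := (Complex.abs_re_le_norm _).trans hmainC
    rw [Complex.ofReal_re] at this
    have habs := abs_le.mp (by rwa [Complex.norm_real, Real.norm_eq_abs] at hmainC)
    linarith [habs.1]
  -- final algebra
  have hd0 : (0 : ℝ) < (D : ℝ) := by
    have : (1 : ℝ) ≤ (D : ℝ) := by exact_mod_cast hD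
    linarith
  have hmain' : a * (D : ℝ) + (1 - (a + b)) * n - δ * (D : ℝ) ≤ p * (D : ℝ) := by
    have h := mul_le_mul_of_nonneg_right hmainR hd0.le
    have hmul : (p - a - (1 - (a + b)) * ((D : ℝ)⁻¹ * n)) * (D : ℝ)
        = p * (D : ℝ) - a * (D : ℝ) - (1 - (a + b)) * n := by
      field_simp
    rw [hmul] at h
    linarith
  have goal1 : (1 - Δ - ((D : ℝ) / n) * δ) / ((Γ - Δ) + ((D : ℝ) / n) * (1 - Γ)) ≤ p := by
    rw [div_le_iff₀ hdenom, ← mul_le_mul_iff_of_pos_right hN]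
    have k1 : (1 - Δ - ((D : ℝ) / n) * δ) * n = (1 - Δ) * n - (D : ℝ) * δ := by
      field_simp
    have k2 : (p * ((Γ - Δ) + ((D : ℝ) / n) * (1 - Γ))) * n
        = p * ((Γ - Δ) * n + (D : ℝ) * (1 - Γ)) := by
      field_simp
      try ring
    rw [k1, k2]
    nlinarith [mul_nonneg (sub_nonneg.2 hnD) (sub_nonneg.2 hΓa),
      mul_nonneg hN.le (sub_nonneg.2 hbΔ), hmain', hδ, hΔ0, hq0, hp0]
  exact ⟨goal1, by linarith [hP₀tr, goal1]⟩
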